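/- Let n, s, u be nonnegative integers, let B ⊆ [n] with |B| ≥ s, and let 𝒜 be a family of subsets of [n] with |𝒜| > 2^s · Σ_{i=0}^{u} C(n, i). Then there exists A ∈ 𝒜 such that |A ∪ B| ≥ s + u + 1. -/

import Mathlib

/-- A set `Y` is shattered by the family `F` if every subset of `Y`
is the trace of some member of `F` on `Y`. -/
def Shatters {α : Type*} [DecidableEq α] (F : Finset (Finset α)) (Y : Finset α) : Prop :=
  ∀ T ⊆ Y, ∃ S ∈ F, S ∩ Y = T

/-- The VC dimension of a family: the largest cardinality of a shattered set. -/
noncomputable def vcDim {α : Type*} [DecidableEq α] (F : Finset (Finset α)) : ℕ :=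
  sSup {m | ∃ Y : Finset α, Shatters F Y ∧ Y.card = m}

/-- `S₁ △ S₂ △ ⋯ △ S_k` for a `k`-tuple of sets. -/
def symmDiffAll {α : Type*} [DecidableEq α] {k : ℕ} (f : Fin k → Finset α) : Finset α :=
  (List.ofFn f).foldr symmDiff ∅

/-- The `k`-fold symmetric difference family `△𝒜^k`. -/
def symmDiffFam {α : Type*} [DecidableEq α] (k : ℕ) (A : Finset (Finset α)) :
    Finset (Finset α) :=
  (Fintype.piFinset fun _ : Fin k => A).image symmDiffAll

/-- The family `𝒜₁ △ ⋯ △ 𝒜ₖ`. -/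
def symmDiffFamMulti {α : Type*} [DecidableEq α] {k : ℕ} (A : Fin k → Finset (Finset α)) :
    Finset (Finset α) :=
  (Fintype.piFinset A).image symmDiffAll

/-- A family is `k`-wise `(n-d)`-union if any `k` of its members have union of size `≤ d`. -/
def KwiseUnion {α : Type*} [DecidableEq α] (k d : ℕ) (A : Finset (Finset α)) : Prop :=
  ∀ f : Fin k → Finset α, (∀ i, f i ∈ A) → (Finset.univ.sup f).card ≤ d

/-- The `i`-compression of a family. -/
def compress {α : Type*} [DecidableEq α] (i : α) (A : Finset (Finset α)) :
    Finset (Finset α) :=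
  A.image fun S => if S ∈ A ∧ S.erase i ∈ A then S else S.erase i

/-- The `(i,j)`-shift of a family. -/
def shiftIJ {α : Type*} [DecidableEq α] (i j : α) (A : Finset (Finset α)) :
    Finset (Finset α) :=
  A.image fun S => if i ∉ S ∧ j ∈ S ∧ insert i (S.erase j) ∉ A then insert i (S.erase j) else S

/-- `p(n,k,d)`: the maximum size of a `k`-wise `(n-d)`-union family on `[n]`. -/
noncomputable def pMax (n k d : ℕ) : ℕ :=
  sSup {m | ∃ F : Finset (Finset (Fin n)), KwiseUnion k d F ∧ F.card = m}

open Finset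


lemma pascal_sum (M m : ℕ) :
    2 * ∑ i ∈ Finset.range m, M.choose i ≤ ∑ i ∈ Finset.range (m + 1), (M + 1).choose i := by
  have h1 : ∑ i ∈ Finset.range (m + 1), (M + 1).choose i
      = 1 + ∑ i ∈ Finset.range m, (M.choose i + M.choose (i + 1)) := by
    rw [Finset.sum_range_succ' (fun i => (M + 1).choose i) m]
    simp [Nat.choose_succ_succ, add_comm]
  have h2 : ∑ i ∈ Finset.range m, M.choose i ≤ 1 + ∑ i ∈ Finset.range m, M.choose (i + 1) := by
    have := Finset.sum_range_succ' (fun i => M.choose i) m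
    have h3 : ∑ i ∈ Finset.range m, M.choose i ≤ ∑ i ∈ Finset.range (m+1), M.choose i :=
      Finset.sum_le_sum_of_subset (Finset.range_subset_range.2 (Nat.le_succ m))
    rw [this] at h3
    simpa [add_comm] using h3
  rw [h1, Finset.sum_add_distrib]
  omega

lemma iter_sum (t : ℕ) : ∀ n u, t ≤ u → t ≤ n →
    2 ^ t * ∑ i ∈ Finset.range (u - t + 1), (n - t).choose i
      ≤ ∑ i ∈ Finset.range (u + 1), n.choose i := by
  induction t with
  | zero => simp
  | succ t ih =>
    intro n u h1 h2
    have hu : u - (t + 1) + 1 = u - t := by omega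
    have hn : n - (t + 1) + 1 = n - t := by omega
    have key := pascal_sum (n - (t+1)) (u - t)
    rw [hn] at key
    calc 2 ^ (t+1) * ∑ i ∈ Finset.range (u - (t+1) + 1), (n - (t+1)).choose i
        = 2 ^ t * (2 * ∑ i ∈ Finset.range (u - t), (n - (t+1)).choose i) := by
          rw [hu]; ring
      _ ≤ 2 ^ t * ∑ i ∈ Finset.range (u - t + 1), (n - t).choose i :=
          Nat.mul_le_mul_left _ key
      _ ≤ ∑ i ∈ Finset.range (u + 1), n.choose i := ih n u (by omega) (by omega)

/-- if `|B| ≥ s` and `|𝒜| > 2^s · ∑_{i=0}^{u} C(n,i)`, then some `A ∈ 𝒜`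
has `|A ∪ B| ≥ s + u + 1`. -/
theorem statement7 (n s u : ℕ) (B : Finset (Fin n)) (hB : s ≤ B.card)
    (A : Finset (Finset (Fin n)))
    (hA : 2 ^ s * ∑ i ∈ Finset.range (u + 1), n.choose i < A.card) :
    ∃ S ∈ A, s + u + 1 ≤ (S ∪ B).card := by
  by_contra hcon
  push_neg at hcon
  have hall : ∀ S ∈ A, (S ∪ B).card ≤ s + u := fun S hS => by
    have := hcon S hS; omega
  set b := B.card with hb
  -- A is nonempty
  have hpos : 0 < A.card := by
    have h1 : 1 ≤ ∑ i ∈ Finset.range (u + 1), n.choose i := by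
      calc 1 = n.choose 0 := (Nat.choose_zero_right n).symm
        _ ≤ _ := Finset.single_le_sum (f := fun i => n.choose i)
            (fun i _ => Nat.zero_le _) (Finset.mem_range.2 (Nat.succ_pos u))
    have := Nat.one_le_two_pow (n := s)
    nlinarith
  obtain ⟨S0, hS0⟩ := Finset.card_pos.1 hpos
  have hble : b ≤ s + u := by
    have := hall S0 hS0
    have hb2 : b ≤ (S0 ∪ B).card := Finset.card_le_card Finset.subset_union_right
    omega
  have hbn : b ≤ n := by
    simpa using Finset.card_le_card (Finset.subset_univ B)
  -- injection counting
  set T := (Finset.univ \ B).powerset.filter (fun X => X.card ≤ s + u - b) with hT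
  have hinj : ∀ S ∈ A, (S ∩ B, S \ B) ∈ B.powerset ×ˢ T := by
    intro S hS
    refine Finset.mem_product.2 ⟨Finset.mem_powerset.2 Finset.inter_subset_right, ?_⟩
    refine Finset.mem_filter.2 ⟨Finset.mem_powerset.2 ?_, ?_⟩
    · intro x hx
      simp only [Finset.mem_sdiff] at hx ⊢
      exact ⟨Finset.mem_univ x, hx.2⟩
    · show (S \ B).card ≤ s + u - b
      have hc : (S \ B).card + B.card = (S ∪ B).card := Finset.card_sdiff_add_card S B
      have := hall S hS
      omega
  have hcard : A.card ≤ (B.powerset ×ˢ T).card := by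
    apply Finset.card_le_card_of_injOn (fun S => (S ∩ B, S \ B)) hinj
    intro S1 h1 S2 h2 heq
    simp only [Prod.mk.injEq] at heq
    ext x
    by_cases hx : x ∈ B
    · constructor <;> intro hxS
      · have : x ∈ S2 ∩ B := heq.1 ▸ Finset.mem_inter.2 ⟨hxS, hx⟩
        exact (Finset.mem_inter.1 this).1
      · have : x ∈ S1 ∩ B := heq.1.symm ▸ Finset.mem_inter.2 ⟨hxS, hx⟩
        exact (Finset.mem_inter.1 this).1
    · constructor <;> intro hxS
      · have : x ∈ S2 \ B := heq.2 ▸ Finset.mem_sdiff.2 ⟨hxS, hx⟩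
        exact (Finset.mem_sdiff.1 this).1
      · have : x ∈ S1 \ B := heq.2.symm ▸ Finset.mem_sdiff.2 ⟨hxS, hx⟩
        exact (Finset.mem_sdiff.1 this).1
  -- compute T.card
  have hTcard : T.card = ∑ i ∈ Finset.range (s + u - b + 1), (n - b).choose i := by
    have hdec : T = (Finset.range (s + u - b + 1)).biUnion
        (fun i => (Finset.univ \ B).powersetCard i) := by
      ext X
      simp only [hT, Finset.mem_filter, Finset.mem_powerset, Finset.mem_biUnion,
        Finset.mem_range, Finset.mem_powersetCard]
      constructor
      · rintro ⟨h1, h2⟩; exact ⟨X.card, by omega, h1, rfl⟩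
      · rintro ⟨i, hi, h1, h2⟩; exact ⟨h1, by omega⟩
    rw [hdec, Finset.card_biUnion]
    · apply Finset.sum_congr rfl
      intro i _
      rw [Finset.card_powersetCard, Finset.card_sdiff_of_subset (Finset.subset_univ B)]
      simp [hb]
    · intro i _ j _ hij
      apply Finset.disjoint_left.2
      intro X hXi hXj
      rw [Finset.mem_powersetCard] at hXi hXj
      exact hij (hXi.2 ▸ hXj.2.symm ▸ rfl)
  have hprod : (B.powerset ×ˢ T).card = 2 ^ b * ∑ i ∈ Finset.range (s + u - b + 1), (n - b).choose i := by
    rw [Finset.card_product, Finset.card_powerset, hTcard]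
  -- arithmetic
  set t := b - s with ht
  have hbst : b = s + t := by omega
  have hmono : ∑ i ∈ Finset.range (s + u - b + 1), (n - b).choose i
      ≤ ∑ i ∈ Finset.range (u - t + 1), (n - t).choose i := by
    have h1 : s + u - b = u - t := by omega
    rw [h1]
    apply Finset.sum_le_sum
    intro i _
    exact Nat.choose_le_choose i (by omega)
  have harith : 2 ^ b * ∑ i ∈ Finset.range (s + u - b + 1), (n - b).choose i
      ≤ 2 ^ s * ∑ i ∈ Finset.range (u + 1), n.choose i := by
    calc 2 ^ b * ∑ i ∈ Finset.range (s + u - b + 1), (n - b).choose i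
        ≤ 2 ^ b * ∑ i ∈ Finset.range (u - t + 1), (n - t).choose i :=
          Nat.mul_le_mul_left _ hmono
      _ = 2 ^ s * (2 ^ t * ∑ i ∈ Finset.range (u - t + 1), (n - t).choose i) := by
          rw [hbst, pow_add]; ring
      _ ≤ 2 ^ s * ∑ i ∈ Finset.range (u + 1), n.choose i :=
          Nat.mul_le_mul_left _ (iter_sum t n u (by omega) (by omega))
  omega
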